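/- arXiv:1707.07254 — 2 statements merged into one kernel-verified Lean document; each statement's English description precedes it below -/
import Mathlib

section
/- Let H = L²(0,1), (e_i) the orthonormal eigenbasis of the Dirichlet Laplacian A with A e_i = −λ_i e_i, λ_i = π² i². Fix p ∈ (2,∞), α ≥ 0, let f ∈ C_b([0,T]×ℝ;ℝ), and define F^i(t,x) := λ_i^{-1} ∫_0^1 e_i(ξ) f(t,x(ξ)) dξ and β_i(x) := −λ_i ⟨e_i, x⟩_{L²} − α ∫_0^1 e_i(ξ) |x(ξ)|^{p−2} x(ξ) dξ. Then for every ε > 0 there exists C_ε ∈ (0,∞) such that Σ_{i=1}^N β_i(x) F^i(t,x) ≥ −C_ε − ε( ‖x‖²_{L²(0,1)} + α ‖x‖^p_{L^p(0,1)} ) for all x ∈ L^p(0,1), t ∈ [0,T], N ∈ ℕ. -/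
open MeasureTheory Real
open scoped ENNReal

noncomputable section

/-- The Lebesgue measure on `(0,1)`. -/
abbrev mu01 : Measure ℝ := volume.restrict (Set.Ioo (0:ℝ) 1)

/-- The eigenfunctions `e_i(ξ) = √2 sin(iπξ)` of the Dirichlet Laplacian on `(0,1)`. -/
def dirEigen (i : ℕ) (ξ : ℝ) : ℝ := Real.sqrt 2 * Real.sin (i * Real.pi * ξ)

/-- The logarithmic derivative `β_i(x) = −λ_i⟨e_i,x⟩ − α∫_0^1 e_i |x|^{p−2} x` of the
perturbed Gaussian measure, `λ_i = π²i²`. -/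
def betaCoeff (p α : ℝ) (i : ℕ) (x : ℝ → ℝ) : ℝ :=
  -(Real.pi ^ 2 * (i:ℝ) ^ 2) * (∫ ξ in Set.Ioo (0:ℝ) 1, dirEigen i ξ * x ξ)
    - α * ∫ ξ in Set.Ioo (0:ℝ) 1, dirEigen i ξ * |x ξ| ^ (p - 2) * x ξ

/-- The components `F^i(t,x) = λ_i⁻¹ ∫_0^1 e_i(ξ) f(t,x(ξ)) dξ` of the drift
`F(t,x) = (−A)⁻¹ F₀(t,x)`. -/
def driftCoeff (f : ℝ → ℝ → ℝ) (i : ℕ) (t : ℝ) (x : ℝ → ℝ) : ℝ :=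
  (Real.pi ^ 2 * (i:ℝ) ^ 2)⁻¹ * ∫ ξ in Set.Ioo (0:ℝ) 1, dirEigen i ξ * f t (x ξ)

/-! ### Auxiliary lemmas -/

instance : IsProbabilityMeasure mu01 := by
  constructor
  rw [Measure.restrict_apply_univ]
  simp [Real.volume_Ioo]

lemma cos_integral (c : ℝ) (hc : c ≠ 0) :
    ∫ ξ in (0:ℝ)..1, Real.cos (c * ξ) = Real.sin c / c := by
  rw [intervalIntegral.integral_comp_mul_left Real.cos hc]
  simp [integral_cos, div_eq_inv_mul]

lemma cos_int_integral (k : ℤ) (hk : k ≠ 0) :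
    ∫ ξ in (0:ℝ)..1, Real.cos ((k:ℝ) * π * ξ) = 0 := by
  have h : ((k:ℝ) * π) ≠ 0 := by
    have := Real.pi_ne_zero
    positivity
  rw [cos_integral _ h, Real.sin_int_mul_pi, zero_div]

lemma dirEigen_mul (i j : ℕ) (ξ : ℝ) :
    dirEigen i ξ * dirEigen j ξ
      = Real.cos ((((i:ℤ) - j : ℤ):ℝ) * π * ξ) - Real.cos ((((i:ℤ) + j : ℤ):ℝ) * π * ξ) := by
  have h := Real.cos_sub_cos (((i:ℝ) - j) * π * ξ) (((i:ℝ) + j) * π * ξ)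
  have h1 : (((i:ℝ) - j) * π * ξ + ((i:ℝ) + j) * π * ξ) / 2 = (i:ℝ) * π * ξ := by ring
  have h2 : (((i:ℝ) - j) * π * ξ - ((i:ℝ) + j) * π * ξ) / 2 = -((j:ℝ) * π * ξ) := by ring
  rw [h1, h2, Real.sin_neg] at h
  push_cast
  rw [h, dirEigen, dirEigen]
  have : Real.sqrt 2 * Real.sqrt 2 = 2 := Real.mul_self_sqrt (by norm_num)
  linear_combination Real.sin ((i:ℝ) * π * ξ) * Real.sin ((j:ℝ) * π * ξ) * this

lemma dirEigen_orth (i j : ℕ) (hi : i ≠ 0) (hj : j ≠ 0) :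
    ∫ ξ in Set.Ioo (0:ℝ) 1, dirEigen i ξ * dirEigen j ξ = if i = j then 1 else 0 := by
  rw [← MeasureTheory.integral_Ioc_eq_integral_Ioo,
      ← intervalIntegral.integral_of_le (by norm_num : (0:ℝ) ≤ 1)]
  have hsum : ((i:ℤ) + j) ≠ 0 := by positivity
  have hInt : IntervalIntegrable (fun ξ => Real.cos ((((i:ℤ) - j : ℤ):ℝ) * π * ξ)) volume 0 1 :=
    (Real.continuous_cos.comp (by continuity)).intervalIntegrable 0 1
  have hInt2 : IntervalIntegrable (fun ξ => Real.cos ((((i:ℤ) + j : ℤ):ℝ) * π * ξ)) volume 0 1 :=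
    (Real.continuous_cos.comp (by continuity)).intervalIntegrable 0 1
  rw [intervalIntegral.integral_congr (g := fun ξ =>
      Real.cos ((((i:ℤ) - j : ℤ):ℝ) * π * ξ) - Real.cos ((((i:ℤ) + j : ℤ):ℝ) * π * ξ))
      (fun ξ _ => dirEigen_mul i j ξ)]
  rw [intervalIntegral.integral_sub hInt hInt2, cos_int_integral _ hsum]
  by_cases h : i = j
  · subst h
    simp only [sub_self, Int.cast_zero, zero_mul]
    simp [if_pos rfl]
  · rw [cos_int_integral _ (by
      intro hcon
      apply h
      omega), if_neg h]
    ring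

lemma dirEigen_abs (i : ℕ) (ξ : ℝ) : |dirEigen i ξ| ≤ Real.sqrt 2 := by
  rw [dirEigen, abs_mul, abs_of_nonneg (Real.sqrt_nonneg 2)]
  calc Real.sqrt 2 * |Real.sin ((i:ℝ) * π * ξ)| ≤ Real.sqrt 2 * 1 :=
        mul_le_mul_of_nonneg_left (Real.abs_sin_le_one _) (Real.sqrt_nonneg 2)
    _ = Real.sqrt 2 := mul_one _

lemma dirEigen_cont (i : ℕ) : Continuous (dirEigen i) := by
  unfold dirEigen; continuity

lemma integrable_bdd_mul {g : ℝ → ℝ} (hg : Integrable g mu01)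
    {e : ℝ → ℝ} (he : Continuous e) (C : ℝ) (hC : ∀ ξ, |e ξ| ≤ C) :
    Integrable (fun ξ => e ξ * g ξ) mu01 :=
  hg.bdd_mul (c := C) he.aestronglyMeasurable (Filter.Eventually.of_forall fun ξ => by simpa using hC ξ)

lemma integrable_ee (i j : ℕ) :
    Integrable (fun ξ => dirEigen i ξ * dirEigen j ξ) mu01 := by
  have : MemLp (fun ξ => dirEigen i ξ * dirEigen j ξ) ⊤ mu01 :=
    memLp_top_of_bound ((dirEigen_cont i).mul (dirEigen_cont j)).aestronglyMeasurable
      (Real.sqrt 2 * Real.sqrt 2)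
      (Filter.Eventually.of_forall fun ξ => by
        rw [Real.norm_eq_abs, abs_mul]
        exact mul_le_mul (dirEigen_abs i ξ) (dirEigen_abs j ξ) (abs_nonneg _) (Real.sqrt_nonneg 2))
  exact this.integrable le_top

/-- Finite Bessel inequality for the sine system on `(0,1)`. -/
lemma bessel (g : ℝ → ℝ) (hg : MemLp g 2 mu01) (N : ℕ) :
    ∑ i ∈ Finset.Icc 1 N, (∫ ξ in Set.Ioo (0:ℝ) 1, dirEigen i ξ * g ξ)^2
      ≤ ∫ ξ in Set.Ioo (0:ℝ) 1, (g ξ)^2 := by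
  set s := Finset.Icc 1 N with hs
  set c : ℕ → ℝ := fun i => ∫ ξ in Set.Ioo (0:ℝ) 1, dirEigen i ξ * g ξ with hc
  set h : ℝ → ℝ := fun ξ => ∑ i ∈ s, c i * dirEigen i ξ with hh
  have hg1 : Integrable g mu01 := hg.integrable one_le_two
  have hg2 : Integrable (fun ξ => (g ξ)^2) mu01 := hg.integrable_sq
  have heg : ∀ i : ℕ, Integrable (fun ξ => dirEigen i ξ * g ξ) mu01 := fun i =>
    integrable_bdd_mul hg1 (dirEigen_cont i) (Real.sqrt 2) (dirEigen_abs i)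
  have hhcont : Continuous h := by
    apply continuous_finset_sum
    exact fun i _ => continuous_const.mul (dirEigen_cont i)
  have hhbd : ∀ ξ, |h ξ| ≤ ∑ i ∈ s, |c i| * Real.sqrt 2 := by
    intro ξ
    refine (Finset.abs_sum_le_sum_abs _ _).trans (Finset.sum_le_sum fun i _ => ?_)
    rw [abs_mul]
    exact mul_le_mul_of_nonneg_left (dirEigen_abs i ξ) (abs_nonneg _)
  have hgh : Integrable (fun ξ => g ξ * h ξ) mu01 := by
    have := integrable_bdd_mul hg1 hhcont (∑ i ∈ s, |c i| * Real.sqrt 2) hhbd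
    simpa [mul_comm] using this
  have hh2 : Integrable (fun ξ => (h ξ)^2) mu01 := by
    have hm : MemLp h ⊤ mu01 :=
      memLp_top_of_bound hhcont.aestronglyMeasurable _
        (Filter.Eventually.of_forall fun ξ => hhbd ξ)
    simpa [pow_two] using ((hm.integrable le_top).bdd_mul hhcont.aestronglyMeasurable
      (Filter.Eventually.of_forall fun ξ => hhbd ξ))
  have key1 : ∫ ξ in Set.Ioo (0:ℝ) 1, g ξ * h ξ = ∑ i ∈ s, (c i)^2 := by
    have : ∀ ξ, g ξ * h ξ = ∑ i ∈ s, c i * (dirEigen i ξ * g ξ) := by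
      intro ξ; rw [hh]; rw [Finset.mul_sum]; exact Finset.sum_congr rfl fun i _ => by ring
    simp_rw [this]
    rw [integral_finset_sum s (fun i _ => (heg i).const_mul (c i))]
    exact Finset.sum_congr rfl fun i _ => by rw [integral_const_mul]; exact (pow_two (c i)).symm
  have key2 : ∫ ξ in Set.Ioo (0:ℝ) 1, (h ξ)^2 = ∑ i ∈ s, (c i)^2 := by
    have expand : ∀ ξ, (h ξ)^2 = ∑ i ∈ s, ∑ j ∈ s, (c i * c j) * (dirEigen i ξ * dirEigen j ξ) := by
      intro ξ
      rw [hh, pow_two, Finset.sum_mul_sum]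
      exact Finset.sum_congr rfl fun i _ => Finset.sum_congr rfl fun j _ => by ring
    simp_rw [expand]
    rw [integral_finset_sum s (fun i _ => integrable_finset_sum s
      (fun j _ => (integrable_ee i j).const_mul _))]
    rw [Finset.sum_congr rfl (fun i hi => integral_finset_sum s
      (fun j _ => (integrable_ee i j).const_mul _))]
    have : ∀ i ∈ s, ∀ j ∈ s,
        ∫ ξ in Set.Ioo (0:ℝ) 1, (c i * c j) * (dirEigen i ξ * dirEigen j ξ)
          = (c i * c j) * (if i = j then 1 else 0) := by
      intro i hi j hj
      rw [integral_const_mul, dirEigen_orth i j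
        (by rw [hs] at hi; exact Nat.one_le_iff_ne_zero.mp (Finset.mem_Icc.mp hi).1)
        (by rw [hs] at hj; exact Nat.one_le_iff_ne_zero.mp (Finset.mem_Icc.mp hj).1)]
    rw [Finset.sum_congr rfl (fun i hi => Finset.sum_congr rfl (fun j hj => this i hi j hj))]
    refine Finset.sum_congr rfl fun i hi => ?_
    have : ∀ j ∈ s, (c i * c j * if i = j then 1 else 0) = if i = j then c i * c j else 0 := by
      intro j _; split <;> simp
    rw [Finset.sum_congr rfl this, Finset.sum_ite_eq s i (fun j => c i * c j)]
    simp [hi, pow_two]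
  have pos : 0 ≤ ∫ ξ in Set.Ioo (0:ℝ) 1, (g ξ - h ξ)^2 :=
    integral_nonneg fun ξ => sq_nonneg _
  have expand : (fun ξ => (g ξ - h ξ)^2)
      = fun ξ => ((g ξ)^2 - 2*(g ξ * h ξ)) + (h ξ)^2 := by
    funext ξ; ring
  have hI : Integrable (fun ξ => (g ξ)^2 - 2*(g ξ * h ξ)) mu01 := hg2.sub (hgh.const_mul 2)
  rw [expand, integral_add hI hh2,
      integral_sub hg2 (hgh.const_mul 2), integral_const_mul, key1, key2] at pos
  have final : ∑ i ∈ s, (c i)^2 ≤ ∫ ξ in Set.Ioo (0:ℝ) 1, (g ξ)^2 := by linarith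
  exact final

lemma sum_inv_sq_aux : ∀ N : ℕ, 1 ≤ N →
    ∑ i ∈ Finset.Icc 1 N, ((i:ℝ)^2)⁻¹ ≤ 2 - ((N:ℝ))⁻¹ := by
  intro N
  induction N with
  | zero => intro h; omega
  | succ n ih =>
    intro _
    by_cases hn : 1 ≤ n
    · have step := ih hn
      rw [Finset.sum_Icc_succ_top (by omega : 1 ≤ n + 1)]
      have hu : (1:ℝ) ≤ (n:ℝ) := by exact_mod_cast hn
      have hupos : (0:ℝ) < (n:ℝ) := by linarith
      have e1 : ((n:ℝ))⁻¹ - ((n:ℝ)+1)⁻¹ = ((n:ℝ)*((n:ℝ)+1))⁻¹ := by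
        field_simp
        ring
      have e2 : ((((n:ℝ))+1)^2)⁻¹ ≤ ((n:ℝ)*((n:ℝ)+1))⁻¹ := by
        apply inv_anti₀ (by positivity) (by nlinarith)
      have hcast : ((n+1 : ℕ):ℝ) = (n:ℝ) + 1 := by push_cast; ring
      rw [hcast]
      linarith
    · have hn0 : n = 0 := by omega
      subst hn0
      norm_num

lemma sum_inv_sq_le (N : ℕ) : ∑ i ∈ Finset.Icc 1 N, ((i:ℝ)^2)⁻¹ ≤ 2 := by
  by_cases h : 1 ≤ N
  · have := sum_inv_sq_aux N h
    have : (0:ℝ) ≤ ((N:ℝ))⁻¹ := by positivity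
    linarith [sum_inv_sq_aux N h]
  · have : N = 0 := by omega
    subst this; simp

lemma rpow_young {p δ r : ℝ} (hp : 2 < p) (hδ : 0 < δ) (hr : 0 ≤ r) :
    r ^ (p-1) ≤ δ * r ^ p + δ ^ (1-p) := by
  rcases le_total r δ⁻¹ with h | h
  · have h1 : r ^ (p-1) ≤ (δ⁻¹) ^ (p-1) := Real.rpow_le_rpow hr h (by linarith)
    have h2 : (δ⁻¹) ^ (p-1) = δ ^ (1-p) := by
      rw [← Real.rpow_neg_one δ, ← Real.rpow_mul hδ.le]
      ring_nf
    have h3 : 0 ≤ δ * r ^ p := by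
      have := Real.rpow_nonneg hr p
      positivity
    rw [h2] at h1
    linarith
  · have hr' : 0 < r := lt_of_lt_of_le (inv_pos.mpr hδ) h
    have e : r ^ (p-1) = r ^ p * r⁻¹ := by
      rw [show p - 1 = p + (-1) by ring, Real.rpow_add hr' p (-1), Real.rpow_neg_one]
    have hinv : r⁻¹ ≤ δ := by
      rw [inv_le_comm₀ hr' hδ] at *
      exact le_trans (le_of_eq rfl) h
    have hrp : 0 ≤ r ^ p := Real.rpow_nonneg hr p
    have h4 : 0 ≤ δ ^ (1-p) := Real.rpow_nonneg hδ.le _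
    calc r ^ (p-1) = r ^ p * r⁻¹ := e
      _ ≤ r ^ p * δ := mul_le_mul_of_nonneg_left hinv hrp
      _ = δ * r ^ p := by ring
      _ ≤ δ * r ^ p + δ ^ (1-p) := by linarith

lemma abs_integral_e_mul (i : ℕ) {φ : ℝ → ℝ} (hφ : Integrable φ mu01) :
    |∫ ξ in Set.Ioo (0:ℝ) 1, dirEigen i ξ * φ ξ|
      ≤ Real.sqrt 2 * ∫ ξ in Set.Ioo (0:ℝ) 1, |φ ξ| := by
  have hint := integrable_bdd_mul hφ (dirEigen_cont i) (Real.sqrt 2) (dirEigen_abs i)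
  calc |∫ ξ in Set.Ioo (0:ℝ) 1, dirEigen i ξ * φ ξ|
      ≤ ∫ ξ in Set.Ioo (0:ℝ) 1, |dirEigen i ξ * φ ξ| := by
        simpa only [Real.norm_eq_abs] using
          norm_integral_le_integral_norm (μ := mu01) (fun ξ => dirEigen i ξ * φ ξ)
    _ ≤ ∫ ξ in Set.Ioo (0:ℝ) 1, Real.sqrt 2 * |φ ξ| := by
        apply integral_mono hint.abs (hφ.abs.const_mul _)
        intro ξ
        simp only [abs_mul]
        exact mul_le_mul_of_nonneg_right (dirEigen_abs i ξ) (abs_nonneg _)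
    _ = Real.sqrt 2 * ∫ ξ in Set.Ioo (0:ℝ) 1, |φ ξ| := integral_const_mul _ _

/-- **Example 2.10, Claim 2.** For every `ε > 0` there exists `C_ε` such that
`Σ_{i=1}^N β_i(x) F^i(t,x) ≥ −C_ε − ε(‖x‖²_{L²} + α‖x‖^p_{L^p})` for all `x ∈ L^p(0,1)`,
`t ∈ [0,T]`, `N ∈ ℕ`. -/
theorem logderivative_pairing_lower_bound_for_reaction_drift
    (T : ℝ) (hT : 0 < T) (p : ℝ) (hp : 2 < p) (α : ℝ) (hα : 0 ≤ α)
    (f : ℝ → ℝ → ℝ)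
    (hfc : Continuous (Function.uncurry f))
    (hfb : ∃ C, ∀ t r, |f t r| ≤ C) :
    ∀ ε > (0:ℝ), ∃ Cε > (0:ℝ), ∀ x : ℝ → ℝ,
      MemLp x (ENNReal.ofReal p) mu01 →
      ∀ t ∈ Set.Icc (0:ℝ) T, ∀ N : ℕ,
      ∑ i ∈ Finset.Icc 1 N, betaCoeff p α i x * driftCoeff f i t x
        ≥ -Cε - ε * ((∫ ξ in Set.Ioo (0:ℝ) 1, (x ξ) ^ 2)
            + α * ∫ ξ in Set.Ioo (0:ℝ) 1, |x ξ| ^ p) := by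
  obtain ⟨C0, hC0⟩ := hfb
  set C : ℝ := max C0 1 with hCdef
  have hC : ∀ t r, |f t r| ≤ C := fun t r => (hC0 t r).trans (le_max_left _ _)
  have hC1 : (1:ℝ) ≤ C := le_max_right _ _
  have hCpos : (0:ℝ) < C := lt_of_lt_of_le one_pos hC1
  intro ε hε
  set δ : ℝ := ε / (2*C) with hδdef
  have hδ : 0 < δ := by positivity
  have hδ1p : 0 ≤ δ ^ (1-p) := Real.rpow_nonneg hδ.le _
  refine ⟨C^2/(4*ε) + α*(2*C)*δ^(1-p) + 1, by positivity, ?_⟩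
  intro x hx t ht N
  -- basic setup
  set g : ℝ → ℝ := fun ξ => f t (x ξ) with hgdef
  have hxm : AEStronglyMeasurable x mu01 := hx.aestronglyMeasurable
  have h2p : (2:ℝ≥0∞) ≤ ENNReal.ofReal p := by
    rw [show (2:ℝ≥0∞) = ENNReal.ofReal 2 by simp]
    exact ENNReal.ofReal_le_ofReal hp.le
  have hx2 : MemLp x 2 mu01 := hx.mono_exponent h2p
  have hft : Continuous (f t) := hfc.comp (Continuous.prodMk_right t)
  have hgm : AEStronglyMeasurable g mu01 := hft.comp_aestronglyMeasurable hxm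
  have hgb : ∀ ξ, |g ξ| ≤ C := fun ξ => hC t (x ξ)
  have hg2 : MemLp g 2 mu01 :=
    (memLp_top_of_bound hgm C (Filter.Eventually.of_forall fun ξ => by
      simpa using hgb ξ)).mono_exponent le_top
  have hg1 : Integrable g mu01 := hg2.integrable one_le_two
  have hgsq : Integrable (fun ξ => (g ξ)^2) mu01 := hg2.integrable_sq
  set X : ℝ := ∫ ξ in Set.Ioo (0:ℝ) 1, (x ξ)^2 with hX
  set P : ℝ := ∫ ξ in Set.Ioo (0:ℝ) 1, |x ξ|^p with hP
  have hX0 : 0 ≤ X := integral_nonneg fun ξ => sq_nonneg _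
  have hP0 : 0 ≤ P := integral_nonneg fun ξ => Real.rpow_nonneg (abs_nonneg _) _
  have hG : ∫ ξ in Set.Ioo (0:ℝ) 1, (g ξ)^2 ≤ C^2 := by
    have hpt : ∀ ξ, (g ξ)^2 ≤ C^2 := fun ξ => by
      nlinarith [hgb ξ, abs_nonneg (g ξ), sq_abs (g ξ)]
    calc ∫ ξ in Set.Ioo (0:ℝ) 1, (g ξ)^2 ≤ ∫ _ in Set.Ioo (0:ℝ) 1, C^2 :=
          integral_mono hgsq (integrable_const _) hpt
      _ = C^2 := by simp
  -- integrability of powers of x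
  have hxp : Integrable (fun ξ => |x ξ|^p) mu01 := by
    have := hx.integrable_norm_rpow (ENNReal.ofReal_pos.mpr (by linarith)).ne'
      ENNReal.ofReal_ne_top
    simpa [Real.norm_eq_abs, ENNReal.toReal_ofReal (by linarith : (0:ℝ) ≤ p)] using this
  have hxEp1 : MemLp x (ENNReal.ofReal (p-1)) mu01 :=
    hx.mono_exponent (ENNReal.ofReal_le_ofReal (by linarith))
  have hxp1 : Integrable (fun ξ => |x ξ|^(p-1)) mu01 := by
    have := hxEp1.integrable_norm_rpow (ENNReal.ofReal_pos.mpr (by linarith)).ne'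
      ENNReal.ofReal_ne_top
    simpa [Real.norm_eq_abs, ENNReal.toReal_ofReal (by linarith : (0:ℝ) ≤ p-1)] using this
  -- the nonlinear term
  set φ : ℝ → ℝ := fun ξ => |x ξ|^(p-2) * x ξ with hφdef
  have habs : ∀ r : ℝ, |(|r|^(p-2) * r)| = |r|^(p-1) := by
    intro r
    rw [abs_mul, abs_of_nonneg (Real.rpow_nonneg (abs_nonneg r) _),
        show p - 1 = (p-2) + 1 by ring,
        Real.rpow_add' (abs_nonneg r) (by intro hcon; linarith), Real.rpow_one]
  have hψ : Continuous fun r : ℝ => |r|^(p-2) * r := by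
    refine Continuous.mul ?_ continuous_id
    have h1 : Continuous fun y : ℝ => y ^ (p-2) :=
      continuous_iff_continuousAt.mpr fun y =>
        Real.continuousAt_rpow_const y (p-2) (Or.inr (by linarith))
    exact h1.comp continuous_abs
  have hφm : AEStronglyMeasurable φ mu01 := hψ.comp_aestronglyMeasurable hxm
  have hφint : Integrable φ mu01 := by
    refine hxp1.mono' hφm (Filter.Eventually.of_forall fun ξ => ?_)
    rw [Real.norm_eq_abs]
    exact (habs (x ξ)).le
  set B : ℝ := ∫ ξ in Set.Ioo (0:ℝ) 1, |x ξ|^(p-1) with hB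
  have hB0 : 0 ≤ B := integral_nonneg fun ξ => Real.rpow_nonneg (abs_nonneg _) _
  have hBbound : B ≤ δ * P + δ^(1-p) := by
    have hint2 : Integrable (fun ξ => δ * |x ξ|^p + δ^(1-p)) mu01 :=
      (hxp.const_mul δ).add (integrable_const _)
    calc B ≤ ∫ ξ in Set.Ioo (0:ℝ) 1, (δ * |x ξ|^p + δ^(1-p)) :=
          integral_mono hxp1 hint2 (fun ξ => rpow_young hp hδ (abs_nonneg _))
      _ = δ * P + δ^(1-p) := by
          rw [integral_add (hxp.const_mul δ) (integrable_const _), integral_const_mul,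
            integral_const]
          simp [hP]
  -- Fourier coefficients
  set a : ℕ → ℝ := fun i => ∫ ξ in Set.Ioo (0:ℝ) 1, dirEigen i ξ * x ξ with ha
  set b : ℕ → ℝ := fun i => ∫ ξ in Set.Ioo (0:ℝ) 1, dirEigen i ξ * φ ξ with hb
  set c : ℕ → ℝ := fun i => ∫ ξ in Set.Ioo (0:ℝ) 1, dirEigen i ξ * g ξ with hcdef
  have hbbd : ∀ i, |b i| ≤ Real.sqrt 2 * B := by
    intro i
    have h1 := abs_integral_e_mul i hφint
    have h2 : (∫ ξ in Set.Ioo (0:ℝ) 1, |φ ξ|) = B := by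
      rw [hB]
      exact integral_congr_ae (Filter.Eventually.of_forall fun ξ => habs (x ξ))
    rw [h2] at h1
    exact h1
  have hcbd : ∀ i, |c i| ≤ Real.sqrt 2 * C := by
    intro i
    have h1 := abs_integral_e_mul i hg1
    have h2 : (∫ ξ in Set.Ioo (0:ℝ) 1, |g ξ|) ≤ C := by
      calc (∫ ξ in Set.Ioo (0:ℝ) 1, |g ξ|) ≤ ∫ _ in Set.Ioo (0:ℝ) 1, C :=
            integral_mono hg1.abs (integrable_const _) hgb
        _ = C := by simp
    exact h1.trans (mul_le_mul_of_nonneg_left h2 (Real.sqrt_nonneg 2))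
  -- per-term identity
  have hterm : ∀ i ∈ Finset.Icc 1 N,
      betaCoeff p α i x * driftCoeff f i t x
        = -(a i * c i) - α * ((Real.pi^2*(i:ℝ)^2)⁻¹ * (b i * c i)) := by
    intro i hi
    have hi1 : 1 ≤ i := (Finset.mem_Icc.mp hi).1
    have hipos : (0:ℝ) < (i:ℝ) := by exact_mod_cast hi1
    have hlam : (Real.pi^2*(i:ℝ)^2) ≠ 0 := by
      have := Real.pi_ne_zero
      positivity
    have eb : b i = ∫ ξ in Set.Ioo (0:ℝ) 1, dirEigen i ξ * |x ξ| ^ (p - 2) * x ξ := by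
      simp only [hb, hφdef]
      simp_rw [mul_assoc]
    show (-(Real.pi^2*(i:ℝ)^2) * a i
        - α * (∫ ξ in Set.Ioo (0:ℝ) 1, dirEigen i ξ * |x ξ| ^ (p - 2) * x ξ))
        * ((Real.pi^2*(i:ℝ)^2)⁻¹ * c i)
      = -(a i * c i) - α * ((Real.pi^2*(i:ℝ)^2)⁻¹ * (b i * c i))
    rw [eb]
    field_simp
  rw [ge_iff_le, Finset.sum_congr rfl hterm, Finset.sum_sub_distrib,
    Finset.sum_neg_distrib, ← Finset.mul_sum]
  -- Term 1 : Cauchy-Schwarz + Bessel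
  have hT1 : ∑ i ∈ Finset.Icc 1 N, a i * c i ≤ ε * X + C^2/(4*ε) := by
    have hcs := Finset.sum_mul_sq_le_sq_mul_sq (Finset.Icc 1 N) a c
    have hax : ∑ i ∈ Finset.Icc 1 N, (a i)^2 ≤ X := bessel x hx2 N
    have hcx : ∑ i ∈ Finset.Icc 1 N, (c i)^2 ≤ C^2 := (bessel g hg2 N).trans hG
    have hsc0 : 0 ≤ ∑ i ∈ Finset.Icc 1 N, (c i)^2 :=
      Finset.sum_nonneg fun i _ => sq_nonneg _
    have h3 : (∑ i ∈ Finset.Icc 1 N, a i * c i)^2 ≤ X * C^2 :=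
      hcs.trans (mul_le_mul hax hcx hsc0 hX0)
    have h4 : ∑ i ∈ Finset.Icc 1 N, a i * c i ≤ Real.sqrt X * C := by
      calc ∑ i ∈ Finset.Icc 1 N, a i * c i ≤ |∑ i ∈ Finset.Icc 1 N, a i * c i| :=
            le_abs_self _
        _ = Real.sqrt ((∑ i ∈ Finset.Icc 1 N, a i * c i)^2) := (Real.sqrt_sq_eq_abs _).symm
        _ ≤ Real.sqrt (X * C^2) := Real.sqrt_le_sqrt h3
        _ = Real.sqrt X * C := by rw [Real.sqrt_mul hX0, Real.sqrt_sq hCpos.le]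
    have h6 : Real.sqrt X * C ≤ ε * X + C^2/(4*ε) := by
      set s := Real.sqrt X with hsq
      have hss : s^2 = X := Real.sq_sqrt hX0
      have key : 4*ε*(s*C) ≤ 4*ε*(ε*s^2) + C^2 := by nlinarith [sq_nonneg (2*ε*s - C)]
      have h4e : (0:ℝ) < 4*ε := by linarith
      calc s*C = (4*ε*(s*C))/(4*ε) := by field_simp
        _ ≤ (4*ε*(ε*s^2) + C^2)/(4*ε) := by gcongr
        _ = ε*s^2 + C^2/(4*ε) := by field_simp
        _ = ε*X + C^2/(4*ε) := by rw [hss]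
    linarith
  -- Term 2 : λ-summability
  have hT2 : ∑ i ∈ Finset.Icc 1 N, (Real.pi^2*(i:ℝ)^2)⁻¹ * (b i * c i) ≤ 2*C*B := by
    have hs2 : Real.sqrt 2 * Real.sqrt 2 = 2 := Real.mul_self_sqrt (by norm_num)
    have hπ2 : (2:ℝ) ≤ Real.pi^2 := by nlinarith [Real.pi_gt_three]
    have step1 : ∀ i ∈ Finset.Icc 1 N,
        (Real.pi^2*(i:ℝ)^2)⁻¹ * (b i * c i) ≤ (Real.pi^2*(i:ℝ)^2)⁻¹ * (2*C*B) := by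
      intro i hi
      have hinv0 : (0:ℝ) ≤ (Real.pi^2*(i:ℝ)^2)⁻¹ := by positivity
      refine mul_le_mul_of_nonneg_left ?_ hinv0
      calc b i * c i ≤ |b i * c i| := le_abs_self _
        _ = |b i| * |c i| := abs_mul _ _
        _ ≤ (Real.sqrt 2 * B) * (Real.sqrt 2 * C) :=
            mul_le_mul (hbbd i) (hcbd i) (abs_nonneg _)
              (mul_nonneg (Real.sqrt_nonneg 2) hB0)
        _ = 2*C*B := by
            rw [show (Real.sqrt 2 * B) * (Real.sqrt 2 * C)
                = (Real.sqrt 2 * Real.sqrt 2) * (B*C) by ring, hs2]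
            ring
    have step2 : ∑ i ∈ Finset.Icc 1 N, (Real.pi^2*(i:ℝ)^2)⁻¹ ≤ 1 := by
      have e1 : ∑ i ∈ Finset.Icc 1 N, (Real.pi^2*(i:ℝ)^2)⁻¹
          = (Real.pi^2)⁻¹ * ∑ i ∈ Finset.Icc 1 N, ((i:ℝ)^2)⁻¹ := by
        rw [Finset.mul_sum]
        exact Finset.sum_congr rfl fun i _ => by rw [mul_inv]
      have e2 : (Real.pi^2)⁻¹ ≤ 2⁻¹ := by
        apply inv_anti₀ (by norm_num) hπ2
      rw [e1]
      calc (Real.pi^2)⁻¹ * ∑ i ∈ Finset.Icc 1 N, ((i:ℝ)^2)⁻¹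
          ≤ 2⁻¹ * 2 := by
            apply mul_le_mul e2 (sum_inv_sq_le N)
              (Finset.sum_nonneg fun i _ => by positivity) (by norm_num)
        _ = 1 := by norm_num
    calc ∑ i ∈ Finset.Icc 1 N, (Real.pi^2*(i:ℝ)^2)⁻¹ * (b i * c i)
        ≤ ∑ i ∈ Finset.Icc 1 N, (Real.pi^2*(i:ℝ)^2)⁻¹ * (2*C*B) :=
          Finset.sum_le_sum step1
      _ = (∑ i ∈ Finset.Icc 1 N, (Real.pi^2*(i:ℝ)^2)⁻¹) * (2*C*B) :=
          (Finset.sum_mul _ _ _).symm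
      _ ≤ 1 * (2*C*B) := by
          apply mul_le_mul_of_nonneg_right step2
          positivity
      _ = 2*C*B := one_mul _
  -- combine
  have hαT2 : α * ∑ i ∈ Finset.Icc 1 N, (Real.pi^2*(i:ℝ)^2)⁻¹ * (b i * c i)
      ≤ α * (2*C*B) := mul_le_mul_of_nonneg_left hT2 hα
  have h4 : 2*C*δ = ε := by
    rw [hδdef]; field_simp
  have hlast : α*(2*C*B) ≤ ε*(α*P) + α*(2*C)*δ^(1-p) := by
    have h2 : α*(2*C*B) ≤ α*(2*C*(δ*P + δ^(1-p))) := by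
      apply mul_le_mul_of_nonneg_left _ hα
      exact mul_le_mul_of_nonneg_left hBbound (by positivity)
    calc α*(2*C*B) ≤ α*(2*C*(δ*P + δ^(1-p))) := h2
      _ = α*((2*C*δ)*P) + α*(2*C)*δ^(1-p) := by ring
      _ = ε*(α*P) + α*(2*C)*δ^(1-p) := by rw [h4]; ring
  linarith [hT1, hαT2, hlast]
end
end

section
/- Let H be a real separable Hilbert space, γ a finite nonnegative Borel measure on H, Y ⊆ H a dense linear subspace, and let ρ : H → [0,∞) be Borel measurable with ∫_H ρ ln ρ dγ < ∞. Then there exist nonnegative ρ_n ∈ FC¹_b, n ∈ ℕ, such that ρ_n → ρ in L¹(H,γ) and sup_n ∫_H ρ_n ln ρ_n dγ < ∞. -/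
open MeasureTheory Real Filter
open scoped ENNReal Topology RealInnerProductSpace

noncomputable section

open scoped Convolution

/-- Cylindrical `C¹_b` functions on a Hilbert space, with directions in `Y`. -/
def IsFC1b {H : Type*} [NormedAddCommGroup H] [InnerProductSpace ℝ H]
    (Y : Submodule ℝ H) (f : H → ℝ) : Prop :=
  ∃ (N : ℕ) (h : Fin N → H) (F : (Fin N → ℝ) → ℝ),
    (∀ i, h i ∈ Y) ∧ ContDiff ℝ 1 F ∧
    (∃ C : ℝ, ∀ y, |F y| ≤ C ∧ ‖fderiv ℝ F y‖ ≤ C) ∧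
    f = fun x => F (fun i => ⟪h i, x⟫)


set_option maxHeartbeats 2000000 in
lemma exists_smooth_approx_pointwise {d : ℕ} (M : ℝ)
    (F : EuclideanSpace ℝ (Fin d) → ℝ)
    (hF : Continuous F) (hF0 : ∀ y, 0 ≤ F y) (hFM : ∀ y, F y ≤ M) :
    ∃ Fk : ℕ → EuclideanSpace ℝ (Fin d) → ℝ,
      (∀ k, ContDiff ℝ 1 (Fk k)) ∧ (∀ k y, 0 ≤ Fk k y ∧ Fk k y ≤ M) ∧
      (∀ k, ∃ C, ∀ y, ‖fderiv ℝ (Fk k) y‖ ≤ C) ∧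
      (∀ y, Tendsto (fun k => Fk k y) atTop (𝓝 (F y))) := by
  have hFnorm : ∀ z : EuclideanSpace ℝ (Fin d), ‖F z‖ ≤ max M 0 := by
    intro z
    rw [Real.norm_eq_abs, abs_le]
    refine ⟨?_, le_max_of_le_left (hFM _)⟩
    have := hF0 z; linarith [le_max_right M 0]
  have hFloc : LocallyIntegrable F (volume : Measure (EuclideanSpace ℝ (Fin d))) :=
    hF.locallyIntegrable
  set φ : ℕ → ContDiffBump (0 : EuclideanSpace ℝ (Fin d)) := fun k =>
    ⟨(k+1 : ℝ)⁻¹, 2*(k+1 : ℝ)⁻¹, by positivity, by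
      have : (0:ℝ) < (k+1 : ℝ)⁻¹ := by positivity
      linarith⟩ with hφdef
  have hφout : Tendsto (fun k => (φ k).rOut) atTop (𝓝 0) := by
    have h1 : Tendsto (fun k : ℕ => ((k:ℝ)+1)⁻¹) atTop (𝓝 0) :=
      tendsto_one_div_add_atTop_nhds_zero_nat.congr (by intro n; rw [one_div])
    have := h1.const_mul (2:ℝ)
    simpa using this
  set K : ℕ → EuclideanSpace ℝ (Fin d) → ℝ := fun k => (φ k).normed volume
  set Fk : ℕ → EuclideanSpace ℝ (Fin d) → ℝ :=
    fun k => (K k) ⋆[ContinuousLinearMap.lsmul ℝ ℝ, volume] F with hFkdef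
  have hKint : ∀ k, Integrable (K k) volume := fun k => (φ k).integrable_normed
  have hint : ∀ k x, Integrable (fun t => K k t * F (x - t)) volume := by
    intro k x
    have hb : ∃ C, ∀ t : EuclideanSpace ℝ (Fin d), ‖F (x - t)‖ ≤ C :=
      ⟨max M 0, fun t => hFnorm _⟩
    have := (hKint k).bdd_mul (f := fun t => F (x - t)) ((hF.comp (continuous_const.sub continuous_id)).aestronglyMeasurable) (c := max M 0) (Filter.Eventually.of_forall fun t => hFnorm (x - t))
    have h2 : (fun t => K k t * F (x - t)) = (fun t => F (x - t) * K k t) := by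
      funext t; ring
    rw [h2]; exact this
  have hFkeq : ∀ k x, Fk k x = ∫ t, K k t * F (x - t) := by
    intro k x
    show ((K k) ⋆[ContinuousLinearMap.lsmul ℝ ℝ, volume] F) x = _
    rw [convolution_def]
    simp only [ContinuousLinearMap.lsmul_apply, smul_eq_mul]
  refine ⟨Fk, ?_, ?_, ?_, ?_⟩
  · intro k
    exact ((φ k).hasCompactSupport_normed.contDiff_convolution_left _
      ((φ k).contDiff_normed (n := 1)) hFloc)
  · intro k y
    constructor
    · rw [hFkeq]
      exact integral_nonneg fun t => mul_nonneg ((φ k).nonneg_normed t) (hF0 _)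
    · rw [hFkeq]
      calc ∫ t, K k t * F (y - t) ≤ ∫ t, K k t * M := by
            apply integral_mono (hint k y) ((hKint k).mul_const M)
            intro t
            exact mul_le_mul_of_nonneg_left (hFM _) ((φ k).nonneg_normed t)
        _ = M := by rw [integral_mul_const, (φ k).integral_normed, one_mul]
  · intro k
    have hK'c : Continuous (fderiv ℝ (K k)) :=
      ContDiff.continuous_fderiv ((φ k).contDiff_normed (n := 1)) (by simp)
    have hK's : HasCompactSupport (fderiv ℝ (K k)) := HasCompactSupport.fderiv (𝕜 := ℝ) (φ k).hasCompactSupport_normed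
    have hK'int : Integrable (fun t => ‖fderiv ℝ (K k) t‖) (volume : Measure (EuclideanSpace ℝ (Fin d))) :=
      (hK'c.norm).integrable_of_hasCompactSupport hK's.norm
    refine ⟨(∫ t, ‖fderiv ℝ (K k) t‖ ∂(volume : Measure (EuclideanSpace ℝ (Fin d)))) * max M 0, fun y => ?_⟩
    have hd := ((φ k).hasCompactSupport_normed (μ := volume)).hasFDerivAt_convolution_left
      (ContinuousLinearMap.lsmul ℝ ℝ) ((φ k).contDiff_normed (n := 1)) hFloc y
    rw [hd.fderiv]
    calc ‖(((fderiv ℝ (K k)) ⋆[(ContinuousLinearMap.lsmul ℝ ℝ : ℝ →L[ℝ] ℝ →L[ℝ] ℝ).precompL (EuclideanSpace ℝ (Fin d)), volume] F) y)‖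
        ≤ ∫ t, ‖(((ContinuousLinearMap.lsmul ℝ ℝ : ℝ →L[ℝ] ℝ →L[ℝ] ℝ).precompL (EuclideanSpace ℝ (Fin d))) (fderiv ℝ (K k) t) (F (y - t)))‖ := by
          rw [convolution_def]
          exact norm_integral_le_integral_norm _
      _ ≤ ∫ t, ‖fderiv ℝ (K k) t‖ * max M 0 ∂(volume : Measure (EuclideanSpace ℝ (Fin d))) := by
          apply integral_mono_of_nonneg (Filter.Eventually.of_forall fun t => norm_nonneg _)
            (hK'int.mul_const _)
          apply Filter.Eventually.of_forall
          intro t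
          calc ‖(((ContinuousLinearMap.lsmul ℝ ℝ : ℝ →L[ℝ] ℝ →L[ℝ] ℝ).precompL (EuclideanSpace ℝ (Fin d))) (fderiv ℝ (K k) t) (F (y - t)))‖
              ≤ ‖(((ContinuousLinearMap.lsmul ℝ ℝ : ℝ →L[ℝ] ℝ →L[ℝ] ℝ).precompL (EuclideanSpace ℝ (Fin d))) (fderiv ℝ (K k) t))‖ * ‖F (y - t)‖ :=
                ContinuousLinearMap.le_opNorm _ _
            _ ≤ ‖fderiv ℝ (K k) t‖ * max M 0 := by
                apply mul_le_mul _ (hFnorm _) (norm_nonneg _) (norm_nonneg _)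
                refine ContinuousLinearMap.opNorm_le_bound _ (norm_nonneg _) fun c => ?_
                refine ContinuousLinearMap.opNorm_le_bound _ (by positivity) fun v => ?_
                rw [ContinuousLinearMap.precompL_apply, ContinuousLinearMap.lsmul_apply, smul_eq_mul, norm_mul]
                calc ‖fderiv ℝ (K k) t v‖ * ‖c‖ ≤ ‖fderiv ℝ (K k) t‖ * ‖v‖ * ‖c‖ := by
                      gcongr; exact ContinuousLinearMap.le_opNorm _ _
                  _ = _ := by ring
      _ = (∫ t, ‖fderiv ℝ (K k) t‖ ∂(volume : Measure (EuclideanSpace ℝ (Fin d)))) * max M 0 := integral_mul_const _ _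
  · intro y
    exact ContDiffBump.convolution_tendsto_right_of_continuous hφout hF y


lemma phi_lower {s : ℝ} (hs : 0 ≤ s) : s - 1 ≤ s * Real.log s := by
  rcases eq_or_lt_of_le hs with h | h
  · simp [← h]
  · have hlog : 1 - s⁻¹ ≤ Real.log s := by
      have h2 : Real.log (1/s) ≤ 1/s - 1 := by
        have := Real.log_le_sub_one_of_pos (x := 1/s) (by positivity)
        linarith
      rw [one_div, Real.log_inv] at h2
      linarith
    have h3 := mul_le_mul_of_nonneg_left hlog (le_of_lt h)
    have hs' : s * (1 - s⁻¹) = s - 1 := by field_simp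
    rw [hs'] at h3
    exact h3

lemma phi_mono {a b : ℝ} (ha : 1 ≤ a) (hab : a ≤ b) :
    a * Real.log a ≤ b * Real.log b := by
  have h1 : Real.log a ≤ Real.log b := Real.log_le_log (by linarith) hab
  have h2 : 0 ≤ Real.log a := Real.log_nonneg ha
  nlinarith

lemma phi_trunc {s M : ℝ} (hs : 0 ≤ s) (hM : 1 ≤ M) :
    min s M * Real.log (min s M) ≤ s * Real.log s + 1 := by
  rcases le_total s M with h | h
  · rw [min_eq_left h]; linarith
  · rw [min_eq_right h]
    have := phi_mono hM h
    linarith [phi_lower hs]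

lemma phi_compare {a b M : ℝ} (hM : 1 ≤ M) (ha0 : 0 ≤ a) (haM : a ≤ M)
    (hb0 : 0 ≤ b) (hbM : b ≤ M) :
    a * Real.log a ≤ b * Real.log b + 1 + (1 + Real.log M) * |a - b| := by
  have hlogM : 0 ≤ Real.log M := Real.log_nonneg hM
  have habs : 0 ≤ (1 + Real.log M) * |a - b| := by positivity
  have hblog : -1 ≤ b * Real.log b := by linarith [phi_lower hb0]
  rcases le_total a 1 with h1 | h1
  · -- a ≤ 1 : a log a ≤ 0
    have hla : Real.log a ≤ 0 := by
      rcases eq_or_lt_of_le ha0 with h | h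
      · simp [← h]
      · exact Real.log_nonpos (le_of_lt h) h1
    nlinarith [mul_nonneg ha0 (neg_nonneg.mpr hla)]
  · -- 1 ≤ a
    have ha1 : 0 < a := by linarith
    have hlogaM : Real.log a ≤ Real.log M := Real.log_le_log ha1 haM
    rcases le_total a b with hab | hab
    · have := phi_mono h1 hab; linarith
    · -- b ≤ a
      have habeq : |a - b| = a - b := abs_of_nonneg (by linarith)
      rw [habeq]
      rcases eq_or_lt_of_le hb0 with hb | hb
      · -- b = 0
        rw [← hb]
        simp only [Real.log_zero, mul_zero, zero_mul, sub_zero]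
        have h2 : a * Real.log a ≤ a * Real.log M :=
          mul_le_mul_of_nonneg_left hlogaM (le_of_lt ha1)
      -- a log a ≤ a log M ≤ (1+log M) a
        nlinarith
      · -- 0 < b
        have hquot : Real.log a - Real.log b ≤ a / b - 1 := by
          have := Real.log_le_sub_one_of_pos (x := a / b) (by positivity)
          rwa [Real.log_div (ne_of_gt ha1) (ne_of_gt hb)] at this
        have h3 : b * (Real.log a - Real.log b) ≤ a - b := by
          have := mul_le_mul_of_nonneg_left hquot (le_of_lt hb)
          have heq : b * (a / b - 1) = a - b := by field_simp
          linarith [heq ▸ this]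
        have h4 : (a - b) * Real.log a ≤ (a - b) * Real.log M :=
          mul_le_mul_of_nonneg_left hlogaM (by linarith)
        nlinarith

lemma integrable_of_bdd {H : Type*} [MeasurableSpace H]
    {γ : Measure H} [IsFiniteMeasure γ] {u : H → ℝ} (hm : AEStronglyMeasurable u γ)
    (C : ℝ) (h : ∀ x, |u x| ≤ C) : Integrable u γ :=
  Integrable.mono' (integrable_const C) hm
    (Filter.Eventually.of_forall fun x => by rw [Real.norm_eq_abs]; exact h x)

lemma clamp_abs_le {M f g : ℝ} (hM : 0 ≤ M) (hf0 : 0 ≤ f) (hfM : f ≤ M) :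
    |max 0 (min g M) - f| ≤ |g - f| := by
  rcases le_total g 0 with h | h
  · rw [min_eq_left (h.trans hM), max_eq_left h, zero_sub, abs_neg, abs_of_nonneg hf0]
    have := neg_abs_le (g - f)
    linarith
  · rcases le_total g M with h2 | h2
    · rw [min_eq_left h2, max_eq_right h]
    · rw [min_eq_right h2, max_eq_right hM, abs_of_nonneg (by linarith)]
      have := le_abs_self (g - f)
      linarith

lemma exists_cylindrical_approx
    {H : Type*} [NormedAddCommGroup H] [InnerProductSpace ℝ H] [CompleteSpace H]
    [TopologicalSpace.SeparableSpace H] [MeasurableSpace H] [BorelSpace H]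
    (γ : Measure H) [IsFiniteMeasure γ]
    (Y : Submodule ℝ H) (hYdense : Dense (Y : Set H))
    (M : ℝ) (hM : 0 ≤ M) (f : H → ℝ) (hfm : Measurable f)
    (hf0 : ∀ x, 0 ≤ f x) (hfM : ∀ x, f x ≤ M)
    {ε : ℝ} (hε : 0 < ε) :
    ∃ g : H → ℝ, IsFC1b Y g ∧ (∀ x, 0 ≤ g x ∧ g x ≤ M) ∧
      ∫ x, |g x - f x| ∂γ < ε := by
  haveI : SecondCountableTopology H :=
    UniformSpace.secondCountable_of_separable H
  -- f is integrable
  have hfsm : AEStronglyMeasurable f γ := hfm.aestronglyMeasurable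
  have hfi : Integrable f γ := integrable_of_bdd hfsm M
    (fun x => by rw [abs_of_nonneg (hf0 x)]; exact hfM x)
  -- bounded continuous approximation
  obtain ⟨g₀, hg₀, hg₀i⟩ := hfi.exists_boundedContinuous_integral_sub_le
    (show (0:ℝ) < ε/4 by linarith)
  -- clamp it to [0, M]
  set g₁ : H → ℝ := fun x => max 0 (min (g₀ x) M) with hg₁def
  have hg₁c : Continuous g₁ := continuous_const.max (g₀.continuous.min continuous_const)
  have hg₁0 : ∀ x, 0 ≤ g₁ x := fun x => le_max_left _ _
  have hg₁M : ∀ x, g₁ x ≤ M := fun x => max_le hM (min_le_right _ _)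
  have hg₁i : Integrable g₁ γ := integrable_of_bdd hg₁c.aestronglyMeasurable M
    (fun x => by rw [abs_of_nonneg (hg₁0 x)]; exact hg₁M x)
  have int1 : ∫ x, |g₁ x - f x| ∂γ ≤ ε/4 := by
    have hnint : Integrable (fun x => ‖f x - g₀ x‖) γ := (hfi.sub hg₀i).norm
    refine le_trans (integral_mono ((hg₁i.sub hfi).abs) hnint ?_) hg₀
    intro x
    show |g₁ x - f x| ≤ ‖f x - g₀ x‖
    rw [Real.norm_eq_abs, abs_sub_comm (f x)]
    exact clamp_abs_le hM (hf0 x) (hfM x) (g := g₀ x)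
  -- dense sequence in Y
  haveI : Nonempty (Y : Set H) := ⟨⟨0, Y.zero_mem⟩⟩
  obtain ⟨u, hu⟩ := TopologicalSpace.exists_dense_seq (Y : Set H)
  set v : ℕ → H := fun k => (u k : H) with hvdef
  have hv : ∀ k, v k ∈ Y := fun k => (u k).2
  have hvd : DenseRange v := hYdense.denseRange_val.comp hu continuous_subtype_val
  -- finite-dimensional subspaces
  set V : ℕ → Submodule ℝ H := fun n => Submodule.span ℝ (v '' Set.Iic n) with hVdef
  have hVfin : ∀ n, FiniteDimensional ℝ (V n) := fun n =>
    FiniteDimensional.span_of_finite ℝ ((Set.finite_Iic n).image v)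
  set P : ℕ → H → H := fun n =>
    letI := hVfin n
    letI : CompleteSpace (V n) := FiniteDimensional.complete ℝ _
    fun x => (Submodule.orthogonalProjectionOnto (V n) x : H) with hPdef
  have hPc : ∀ n, Continuous (P n) := fun n => by
    letI := hVfin n
    letI : CompleteSpace (V n) := FiniteDimensional.complete ℝ _
    exact continuous_subtype_val.comp (Submodule.orthogonalProjectionOnto (V n)).continuous
  have hPle : ∀ n (x w : H), w ∈ V n → ‖x - P n x‖ ≤ ‖x - w‖ := by
    intro n x w hw
    letI := hVfin n
    letI : CompleteSpace (V n) := FiniteDimensional.complete ℝ _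
    calc ‖x - P n x‖ = ⨅ w' : V n, ‖x - w'‖ := Submodule.starProjection_minimal x
      _ ≤ ‖x - w‖ := ciInf_le ⟨0, by rintro r ⟨i, rfl⟩; exact norm_nonneg _⟩ (⟨w, hw⟩ : V n)
  have hPtend : ∀ x, Tendsto (fun n => P n x) atTop (𝓝 x) := by
    intro x
    refine Metric.tendsto_atTop.2 fun ε' hε' => ?_
    obtain ⟨k, hk⟩ := Metric.denseRange_iff.1 hvd x ε' hε'
    refine ⟨k, fun n hn => ?_⟩
    have hmem : v k ∈ V n := Submodule.subset_span ⟨k, Set.mem_Iic.2 hn, rfl⟩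
    calc dist (P n x) x = ‖x - P n x‖ := by rw [dist_eq_norm, norm_sub_rev]
      _ ≤ ‖x - v k‖ := hPle n x (v k) hmem
      _ = dist x (v k) := (dist_eq_norm _ _).symm
      _ < ε' := hk
  -- dominated convergence for projections
  have hDCT1 : Tendsto (fun n => ∫ x, |g₁ (P n x) - g₁ x| ∂γ) atTop (𝓝 0) := by
    have h0 : (0:ℝ) = ∫ _x, (0:ℝ) ∂γ := by simp
    rw [h0]
    apply tendsto_integral_of_dominated_convergence (fun _ => M)
    · intro n
      exact ((hg₁c.comp (hPc n)).sub hg₁c).abs.aestronglyMeasurable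
    · exact integrable_const M
    · intro n
      refine Filter.Eventually.of_forall fun x => ?_
      rw [Real.norm_eq_abs, abs_abs, abs_sub_le_iff]
      constructor
      · linarith [hg₁0 x, hg₁M (P n x)]
      · linarith [hg₁0 (P n x), hg₁M x]
    · refine Filter.Eventually.of_forall fun x => ?_
      have h1 : Tendsto (fun n => g₁ (P n x) - g₁ x) atTop (𝓝 (g₁ x - g₁ x)) :=
        ((hg₁c.tendsto x).comp (hPtend x)).sub tendsto_const_nhds
      have h2 := h1.abs
      simpa using h2
  obtain ⟨n₀, hn₀⟩ := (hDCT1.eventually_lt_const (show (0:ℝ) < ε/4 by linarith)).exists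
  -- orthonormal basis of V n₀
  letI := hVfin n₀
  letI : CompleteSpace (V n₀) := FiniteDimensional.complete ℝ _
  set d := Module.finrank ℝ (V n₀) with hddef
  set b : OrthonormalBasis (Fin d) ℝ (V n₀) := stdOrthonormalBasis ℝ (V n₀) with hbdef
  set e : Fin d → H := fun i => (b i : H) with hedef
  have he_mem : ∀ i, e i ∈ Y := by
    intro i
    have hsub : v '' Set.Iic n₀ ⊆ (Y : Set H) := by
      rintro _ ⟨k, -, rfl⟩; exact hv k
    exact Submodule.span_le.2 hsub (b i).2
  have hP_eq : ∀ x, P n₀ x = ∑ i, ⟪e i, x⟫ • e i := by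
    intro x
    have h1 := b.orthogonalProjectionOnto_apply_eq_sum (x := x)
    have h2 := congrArg (Subtype.val : V n₀ → H) h1
    rw [hPdef]
    simp only at h2 ⊢
    rw [h2]
    push_cast
    rfl
  -- cylindrical coordinates
  set pp : H → EuclideanSpace ℝ (Fin d) :=
    fun x => (EuclideanSpace.equiv (Fin d) ℝ).symm (fun i => ⟪e i, x⟫) with hppdef
  have hppc : Continuous pp :=
    (EuclideanSpace.equiv (Fin d) ℝ).symm.continuous.comp
      (continuous_pi fun i => (innerSL ℝ (e i)).continuous)
  set S : EuclideanSpace ℝ (Fin d) → H := fun t => ∑ i, t i • e i with hSdef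
  have hSc : Continuous S :=
    continuous_finset_sum _ fun i _ => ((EuclideanSpace.proj i).continuous).smul continuous_const
  set F₀ : EuclideanSpace ℝ (Fin d) → ℝ := g₁ ∘ S with hF₀def
  have hF₀c : Continuous F₀ := hg₁c.comp hSc
  have hF₀0 : ∀ y, 0 ≤ F₀ y := fun y => hg₁0 _
  have hF₀M : ∀ y, F₀ y ≤ M := fun y => hg₁M _
  have hcomp : ∀ x, F₀ (pp x) = g₁ (P n₀ x) := by
    intro x
    have hs : S (pp x) = P n₀ x := by rw [hP_eq x]; rfl
    rw [hF₀def]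
    simp only [Function.comp_apply, hs]
  -- mollified approximations
  obtain ⟨Fk, hFk1, hFk2, hFk3, hFk4⟩ := exists_smooth_approx_pointwise M F₀ hF₀c hF₀0 hF₀M
  have hDCT2 : Tendsto (fun k => ∫ x, |Fk k (pp x) - F₀ (pp x)| ∂γ) atTop (𝓝 0) := by
    have h0 : (0:ℝ) = ∫ _x, (0:ℝ) ∂γ := by simp
    rw [h0]
    apply tendsto_integral_of_dominated_convergence (fun _ => M)
    · intro k
      exact (((hFk1 k).continuous.comp hppc).sub (hF₀c.comp hppc)).abs.aestronglyMeasurable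
    · exact integrable_const M
    · intro k
      refine Filter.Eventually.of_forall fun x => ?_
      rw [Real.norm_eq_abs, abs_abs, abs_sub_le_iff]
      constructor
      · linarith [(hFk2 k (pp x)).2, hF₀0 (pp x)]
      · linarith [(hFk2 k (pp x)).1, hF₀M (pp x)]
    · refine Filter.Eventually.of_forall fun x => ?_
      have h1 : Tendsto (fun k => Fk k (pp x) - F₀ (pp x)) atTop (𝓝 (F₀ (pp x) - F₀ (pp x))) :=
        (hFk4 (pp x)).sub tendsto_const_nhds
      have h2 := h1.abs
      simpa using h2
  obtain ⟨k₀, hk₀⟩ := (hDCT2.eventually_lt_const (show (0:ℝ) < ε/4 by linarith)).exists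
  -- the final function
  refine ⟨fun x => Fk k₀ (pp x), ?_, fun x => hFk2 k₀ (pp x), ?_⟩
  · -- IsFC1b
    obtain ⟨C₁, hC₁⟩ := hFk3 k₀
    set A : (Fin d → ℝ) →L[ℝ] EuclideanSpace ℝ (Fin d) :=
      (EuclideanSpace.equiv (Fin d) ℝ).symm.toContinuousLinearMap with hAdef
    refine ⟨d, e, fun y => Fk k₀ (A y), he_mem, (hFk1 k₀).comp A.contDiff, ?_, ?_⟩
    · refine ⟨max M (C₁ * ‖A‖), fun y => ⟨?_, ?_⟩⟩
      · rw [abs_le]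
        constructor
        · have := (hFk2 k₀ (A y)).1
          have hM0 : -(max M (C₁ * ‖A‖)) ≤ 0 := by
            simp only [neg_nonpos]
            exact le_trans hM (le_max_left _ _)
          linarith
        · exact le_trans (hFk2 k₀ (A y)).2 (le_max_left _ _)
      · have hdiff : DifferentiableAt ℝ (Fk k₀) (A y) :=
          ((hFk1 k₀).differentiable one_ne_zero).differentiableAt
        have hfd : fderiv ℝ (fun y => Fk k₀ (A y)) y = (fderiv ℝ (Fk k₀) (A y)).comp A := by
          rw [show (fun y => Fk k₀ (A y)) = (Fk k₀) ∘ A from rfl]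
          rw [fderiv_comp y hdiff A.differentiableAt, A.fderiv]
        rw [hfd]
        refine le_trans (ContinuousLinearMap.opNorm_comp_le _ _) ?_
        refine le_trans (mul_le_mul_of_nonneg_right (hC₁ (A y)) (norm_nonneg A)) ?_
        exact le_max_right _ _
    · rfl
  · -- integral bound
    have hbd1 : Integrable (fun x => |Fk k₀ (pp x) - F₀ (pp x)|) γ :=
      integrable_of_bdd (((hFk1 k₀).continuous.comp hppc).sub (hF₀c.comp hppc)).abs.aestronglyMeasurable
        M (fun x => by
          rw [abs_abs, abs_sub_le_iff]
          constructor
          · linarith [(hFk2 k₀ (pp x)).2, hF₀0 (pp x)]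
          · linarith [(hFk2 k₀ (pp x)).1, hF₀M (pp x)])
    have hbd2 : Integrable (fun x => |g₁ (P n₀ x) - g₁ x|) γ :=
      integrable_of_bdd ((hg₁c.comp (hPc n₀)).sub hg₁c).abs.aestronglyMeasurable M
        (fun x => by
          rw [abs_abs, abs_sub_le_iff]
          constructor
          · linarith [hg₁0 x, hg₁M (P n₀ x)]
          · linarith [hg₁0 (P n₀ x), hg₁M x])
    have hbd3 : Integrable (fun x => |g₁ x - f x|) γ := (hg₁i.sub hfi).abs
    have hlhs : Integrable (fun x => |Fk k₀ (pp x) - f x|) γ :=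
      integrable_of_bdd ((((hFk1 k₀).continuous.comp hppc).aestronglyMeasurable.sub hfsm).norm)
        (2*M) (fun x => by
          rw [abs_abs, abs_sub_le_iff]
          constructor
          · linarith [(hFk2 k₀ (pp x)).2, hf0 x, hfM x, (hFk2 k₀ (pp x)).1]
          · linarith [(hFk2 k₀ (pp x)).2, hf0 x, hfM x, (hFk2 k₀ (pp x)).1])
    have key : ∫ x, |Fk k₀ (pp x) - f x| ∂γ ≤
        (∫ x, |Fk k₀ (pp x) - F₀ (pp x)| ∂γ) + (∫ x, |g₁ (P n₀ x) - g₁ x| ∂γ)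
          + ∫ x, |g₁ x - f x| ∂γ := by
      have hab : Integrable (fun x => |Fk k₀ (pp x) - F₀ (pp x)| + |g₁ (P n₀ x) - g₁ x|) γ :=
        hbd1.add hbd2
      have habc : Integrable
          (fun x => |Fk k₀ (pp x) - F₀ (pp x)| + |g₁ (P n₀ x) - g₁ x| + |g₁ x - f x|) γ :=
        hab.add hbd3
      rw [← integral_add hbd1 hbd2, ← integral_add hab hbd3]
      apply integral_mono hlhs habc
      intro x
      show |Fk k₀ (pp x) - f x| ≤ _
      have htr : |Fk k₀ (pp x) - f x| ≤
          |Fk k₀ (pp x) - F₀ (pp x)| + |F₀ (pp x) - g₁ x| + |g₁ x - f x| := by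
        calc |Fk k₀ (pp x) - f x| ≤ |Fk k₀ (pp x) - g₁ x| + |g₁ x - f x| := abs_sub_le _ _ _
          _ ≤ (|Fk k₀ (pp x) - F₀ (pp x)| + |F₀ (pp x) - g₁ x|) + |g₁ x - f x| := by
              linarith [abs_sub_le (Fk k₀ (pp x)) (F₀ (pp x)) (g₁ x)]
      have hre : |F₀ (pp x) - g₁ x| = |g₁ (P n₀ x) - g₁ x| := by rw [hcomp x]
      rw [hre] at htr
      exact htr
    calc ∫ x, |Fk k₀ (pp x) - f x| ∂γ ≤ _ := key
      _ < ε/4 + ε/4 + ε/4 := add_lt_add_of_lt_of_le (add_lt_add hk₀ hn₀) int1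
      _ < ε := by linarith

lemma phi_abs_le {x M : ℝ} (hx0 : 0 ≤ x) (hxM : x ≤ M) (hM : 1 ≤ M) :
    |x * Real.log x| ≤ M * Real.log M + 1 := by
  have hMlog : 0 ≤ M * Real.log M := mul_nonneg (by linarith) (Real.log_nonneg hM)
  rw [abs_le]
  constructor
  · linarith [phi_lower hx0]
  · rcases le_total x 1 with h | h
    · have hlx : Real.log x ≤ 0 := by
        rcases eq_or_lt_of_le hx0 with h' | h'
        · simp [← h']
        · exact Real.log_nonpos (le_of_lt h') h
      nlinarith [mul_nonneg hx0 (neg_nonneg.mpr hlx)]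
    · linarith [phi_mono h hxM]

lemma IsFC1b.continuous_bdd {H : Type*} [NormedAddCommGroup H] [InnerProductSpace ℝ H]
    {Y : Submodule ℝ H} {f : H → ℝ} (hf : IsFC1b Y f) :
    Continuous f ∧ ∃ C : ℝ, ∀ x, |f x| ≤ C := by
  obtain ⟨N, h, F, -, hF, ⟨C, hC⟩, rfl⟩ := hf
  exact ⟨hF.continuous.comp (continuous_pi fun i => (innerSL ℝ (h i)).continuous),
    C, fun x => (hC _).1⟩

/-- **Corollary C.3.** If `ρ ≥ 0` is Borel with finite entropy `∫ ρ ln ρ dγ < ∞`, then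
there are nonnegative cylindrical `ρ_n ∈ FC¹_b` with `ρ_n → ρ` in `L¹(H,γ)` and
`sup_n ∫ ρ_n ln ρ_n dγ < ∞`. -/
theorem entropy_bounded_cylindrical_approximation
    {H : Type*} [NormedAddCommGroup H] [InnerProductSpace ℝ H] [CompleteSpace H]
    [TopologicalSpace.SeparableSpace H] [MeasurableSpace H] [BorelSpace H]
    (γ : Measure H) [IsFiniteMeasure γ]
    (Y : Submodule ℝ H) (hYdense : Dense (Y : Set H))
    (ρ : H → ℝ) (hρmeas : Measurable ρ) (hρpos : ∀ x, 0 ≤ ρ x)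
    (hent : Integrable (fun x => ρ x * Real.log (ρ x)) γ) :
    ∃ ρn : ℕ → H → ℝ,
      (∀ n, IsFC1b Y (ρn n)) ∧ (∀ n x, 0 ≤ ρn n x) ∧
      Tendsto (fun n => ∫ x, |ρn n x - ρ x| ∂γ) atTop (𝓝 0) ∧
      ∃ C : ℝ, ∀ n, ∫ x, ρn n x * Real.log (ρn n x) ∂γ ≤ C := by
  set Vγ : ℝ := (γ Set.univ).toReal with hVγdef
  have hVγ : 0 ≤ Vγ := ENNReal.toReal_nonneg
  have hρint : Integrable ρ γ := by
    have hgint : Integrable (fun x => ρ x * Real.log (ρ x) + 1) γ :=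
      hent.add (integrable_const 1)
    refine Integrable.mono' hgint hρmeas.aestronglyMeasurable
      (Filter.Eventually.of_forall fun x => ?_)
    show ‖ρ x‖ ≤ ρ x * Real.log (ρ x) + 1
    rw [Real.norm_eq_abs, abs_of_nonneg (hρpos x)]
    linarith [phi_lower (hρpos x)]
  set trunc : ℕ → H → ℝ := fun n x => min (ρ x) ((n:ℝ)+1) with htruncdef
  have htr_meas : ∀ n, Measurable (trunc n) := fun n => hρmeas.min measurable_const
  have htr0 : ∀ n x, 0 ≤ trunc n x := fun n x => le_min (hρpos x) (by positivity)
  have htrM : ∀ n x, trunc n x ≤ (n:ℝ)+1 := fun n x => min_le_right _ _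
  have htrρ : ∀ n x, trunc n x ≤ ρ x := fun n x => min_le_left _ _
  have htr_int : ∀ n, Integrable (trunc n) γ := fun n =>
    Integrable.mono' hρint (htr_meas n).aestronglyMeasurable
      (Filter.Eventually.of_forall fun x => by
        rw [Real.norm_eq_abs, abs_of_nonneg (htr0 n x)]; exact htrρ n x)
  have hMn : ∀ n : ℕ, (1:ℝ) ≤ (n:ℝ)+1 := fun n =>
    le_add_of_nonneg_left (Nat.cast_nonneg n)
  have hlogMn : ∀ n : ℕ, (0:ℝ) ≤ Real.log ((n:ℝ)+1) := fun n => Real.log_nonneg (hMn n)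
  set εs : ℕ → ℝ := fun n => 1 / (((n:ℝ)+1) * (1 + Real.log ((n:ℝ)+1))) with hεsdef
  have hεpos : ∀ n, 0 < εs n := fun n => by
    have h1 : (0:ℝ) < (n:ℝ)+1 := by positivity
    have h2 : (0:ℝ) < 1 + Real.log ((n:ℝ)+1) := by linarith [hlogMn n]
    positivity
  have hεmul : ∀ n : ℕ, (1 + Real.log ((n:ℝ)+1)) * εs n = 1 / ((n:ℝ)+1) := fun n => by
    have h1 : ((n:ℝ)+1) ≠ 0 := by positivity
    have h2 : (1 + Real.log ((n:ℝ)+1)) ≠ 0 :=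
      ne_of_gt (show (0:ℝ) < _ by linarith [hlogMn n])
    rw [hεsdef]
    field_simp
  have happrox : ∀ n : ℕ, ∃ g : H → ℝ, IsFC1b Y g ∧
      (∀ x, 0 ≤ g x ∧ g x ≤ (n:ℝ)+1) ∧
      ∫ x, |g x - trunc n x| ∂γ < εs n := fun n =>
    exists_cylindrical_approx γ Y hYdense ((n:ℝ)+1) (by positivity) (trunc n)
      (htr_meas n) (htr0 n) (htrM n) (hεpos n)
  choose ρn h1 h2 h3 using happrox
  have hρn_cont : ∀ n, Continuous (ρn n) := fun n => ((h1 n).continuous_bdd).1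
  have hρn_int : ∀ n, Integrable (ρn n) γ := fun n =>
    integrable_of_bdd (hρn_cont n).aestronglyMeasurable ((n:ℝ)+1)
      (fun x => by rw [abs_of_nonneg (h2 n x).1]; exact (h2 n x).2)
  -- L¹ distance of truncation to ρ tends to zero
  have htrunc_tend : Tendsto (fun n => ∫ x, |trunc n x - ρ x| ∂γ) atTop (𝓝 0) := by
    have h0 : (0:ℝ) = ∫ _x, (0:ℝ) ∂γ := by simp
    rw [h0]
    apply tendsto_integral_of_dominated_convergence ρ
    · intro n
      exact (((htr_meas n).sub hρmeas).abs).aestronglyMeasurable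
    · exact hρint
    · intro n
      refine Filter.Eventually.of_forall fun x => ?_
      rw [Real.norm_eq_abs, abs_abs, abs_of_nonpos (by linarith [htrρ n x])]
      linarith [htr0 n x]
    · refine Filter.Eventually.of_forall fun x => ?_
      have hev : ∀ᶠ n : ℕ in atTop, |trunc n x - ρ x| = 0 := by
        refine Filter.eventually_atTop.2 ⟨⌈ρ x⌉₊, fun n hn => ?_⟩
        have : ρ x ≤ (n:ℝ)+1 := by
          calc ρ x ≤ (⌈ρ x⌉₊ : ℝ) := Nat.le_ceil _
            _ ≤ (n:ℝ) := by exact_mod_cast hn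
            _ ≤ (n:ℝ)+1 := by linarith
        rw [htruncdef]
        simp only [min_eq_left this, sub_self, abs_zero]
      exact Tendsto.congr' (hev.mono fun n hn => hn.symm) tendsto_const_nhds
  refine ⟨ρn, h1, fun n x => (h2 n x).1, ?_, ?_⟩
  · -- L¹ convergence
    have hbound : ∀ n, ∫ x, |ρn n x - ρ x| ∂γ ≤ εs n + ∫ x, |trunc n x - ρ x| ∂γ := by
      intro n
      have hai : Integrable (fun x => |ρn n x - trunc n x|) γ :=
        ((hρn_int n).sub (htr_int n)).abs
      have hbi : Integrable (fun x => |trunc n x - ρ x|) γ :=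
        ((htr_int n).sub hρint).abs
      have hstep : ∫ x, |ρn n x - ρ x| ∂γ ≤
          (∫ x, |ρn n x - trunc n x| ∂γ) + ∫ x, |trunc n x - ρ x| ∂γ := by
        rw [← integral_add hai hbi]
        apply integral_mono (((hρn_int n).sub hρint).abs) (hai.add hbi)
        intro x
        exact abs_sub_le _ _ _
      linarith [le_of_lt (h3 n)]
    apply squeeze_zero (fun n => integral_nonneg fun x => abs_nonneg _) hbound
    have hεle : Tendsto εs atTop (𝓝 0) := by
      apply squeeze_zero (fun n => le_of_lt (hεpos n)) (g := fun n : ℕ => 1/((n:ℝ)+1))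
      · intro n
        rw [hεsdef]
        exact one_div_le_one_div_of_le (by positivity) (by nlinarith [hlogMn n])
      · exact tendsto_one_div_add_atTop_nhds_zero_nat
    simpa using hεle.add htrunc_tend
  · -- entropy bound
    refine ⟨(∫ x, ρ x * Real.log (ρ x) ∂γ) + 2*Vγ + 1, fun n => ?_⟩
    have hφtr_int : Integrable (fun x => trunc n x * Real.log (trunc n x)) γ :=
      integrable_of_bdd (Real.continuous_mul_log.measurable.comp (htr_meas n)).aestronglyMeasurable
        (((n:ℝ)+1) * Real.log ((n:ℝ)+1) + 1)
        (fun x => phi_abs_le (htr0 n x) (htrM n x) (hMn n))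
    have hφρn_int : Integrable (fun x => ρn n x * Real.log (ρn n x)) γ :=
      integrable_of_bdd (Real.continuous_mul_log.comp (hρn_cont n)).aestronglyMeasurable
        (((n:ℝ)+1) * Real.log ((n:ℝ)+1) + 1)
        (fun x => phi_abs_le (h2 n x).1 (h2 n x).2 (hMn n))
    have habsi : Integrable (fun x => |ρn n x - trunc n x|) γ :=
      ((hρn_int n).sub (htr_int n)).abs
    have hφtr_le : ∫ x, trunc n x * Real.log (trunc n x) ∂γ ≤
        (∫ x, ρ x * Real.log (ρ x) ∂γ) + Vγ := by
      have h4 : ∫ x, trunc n x * Real.log (trunc n x) ∂γ ≤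
          ∫ x, (ρ x * Real.log (ρ x) + 1) ∂γ := by
        apply integral_mono hφtr_int (hent.add (integrable_const 1))
        intro x
        exact phi_trunc (hρpos x) (hMn n)
      rw [integral_add hent (integrable_const 1), integral_const, smul_eq_mul, mul_one] at h4
      exact h4
    have hmul_le : (1 + Real.log ((n:ℝ)+1)) * ∫ x, |ρn n x - trunc n x| ∂γ ≤ 1 := by
      have h5 : (1 + Real.log ((n:ℝ)+1)) * ∫ x, |ρn n x - trunc n x| ∂γ ≤
          (1 + Real.log ((n:ℝ)+1)) * εs n := by
        apply mul_le_mul_of_nonneg_left (le_of_lt (h3 n)) (by linarith [hlogMn n])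
      rw [hεmul n] at h5
      have h6 : 1/((n:ℝ)+1) ≤ 1 := by
        rw [div_le_one (by positivity : (0:ℝ) < (n:ℝ)+1)]
        linarith [Nat.cast_nonneg (α := ℝ) n]
      linarith
    have hkey : ∫ x, ρn n x * Real.log (ρn n x) ∂γ ≤
        (∫ x, trunc n x * Real.log (trunc n x) ∂γ) + Vγ +
          (1 + Real.log ((n:ℝ)+1)) * ∫ x, |ρn n x - trunc n x| ∂γ := by
      have e1 : Integrable (fun x => trunc n x * Real.log (trunc n x) + 1) γ :=
        hφtr_int.add (integrable_const 1)
      have e2 : Integrable (fun x => (1 + Real.log ((n:ℝ)+1)) * |ρn n x - trunc n x|) γ :=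
        habsi.const_mul _
      have hRi : Integrable (fun x => trunc n x * Real.log (trunc n x) + 1 +
          (1 + Real.log ((n:ℝ)+1)) * |ρn n x - trunc n x|) γ := e1.add e2
      have hle : ∫ x, ρn n x * Real.log (ρn n x) ∂γ ≤
          ∫ x, (trunc n x * Real.log (trunc n x) + 1 +
            (1 + Real.log ((n:ℝ)+1)) * |ρn n x - trunc n x|) ∂γ := by
        apply integral_mono hφρn_int hRi
        intro x
        exact phi_compare (hMn n) (h2 n x).1 (h2 n x).2 (htr0 n x) (htrM n x)
      have heq : ∫ x, (trunc n x * Real.log (trunc n x) + 1 +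
            (1 + Real.log ((n:ℝ)+1)) * |ρn n x - trunc n x|) ∂γ =
          (∫ x, trunc n x * Real.log (trunc n x) ∂γ) + Vγ +
            (1 + Real.log ((n:ℝ)+1)) * ∫ x, |ρn n x - trunc n x| ∂γ := by
        rw [integral_add e1 e2,
          integral_add hφtr_int (integrable_const 1), integral_const, smul_eq_mul, mul_one,
          integral_const_mul, Measure.real]
      rw [heq] at hle
      exact hle
    linarith
end
end
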